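/- Let A be a real symmetric m × m matrix (m ≥ 2) with nonnegative diagonal entries such that A_{ii}·A_{jj} ≥ (m−1)²·A_{ij}² for all i ≠ j. Then A is positive semidefinite. -/

import Mathlib

/-- A real symmetric `m × m` matrix (`m ≥ 2`) with nonnegative
diagonal such that `A_{ii}·A_{jj} ≥ (m-1)²·A_{ij}²` for all `i ≠ j` is positive
semidefinite. -/
theorem posSemidef_of_weighted_minor_condition (m : ℕ) (hm : 2 ≤ m)
    (A : Matrix (Fin m) (Fin m) ℝ) (hsymm : A.IsSymm)
    (hdiag : ∀ i, 0 ≤ A i i)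
    (h : ∀ i j : Fin m, i ≠ j → ((m : ℝ) - 1) ^ 2 * (A i j) ^ 2 ≤ A i i * A j j) :
    A.PosSemidef := by
  have hm2 : (2:ℝ) ≤ (m:ℝ) := by exact_mod_cast hm
  set c : ℝ := (m:ℝ) - 1 with hc
  have hc1 : (1:ℝ) ≤ c := by simp [hc]; linarith
  have hcpos : (0:ℝ) < 2 * c := by linarith
  rw [Matrix.posSemidef_iff_dotProduct_mulVec]
  constructor
  · ext i j
    simp [Matrix.conjTranspose_apply]
    exact (congrFun (congrFun hsymm i) j)
  · intro x
    simp only [star_trivial]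
    set f : Fin m → Fin m → ℝ := fun i j => x i * (A i j * x j) with hf
    set g : Fin m → ℝ := fun i => A i i * x i ^ 2 with hg
    set T : ℝ := ∑ i, g i with hT
    have hS : dotProduct x (A.mulVec x) = ∑ i, ∑ j, f i j := by
      simp [dotProduct, Matrix.mulVec, Finset.mul_sum, hf]
    rw [hS]
    rw [← mul_nonneg_iff_of_pos_left hcpos]
    have key : ∀ i j : Fin m, i ≠ j → -(g i + g j) ≤ 2 * c * f i j := by
      intro i j hij
      simp only [hf, hg]
      have h1 := h i j hij
      have hxi := hdiag i
      have hxj := hdiag j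
      have hsq : (c * A i j * (x i * x j)) ^ 2 ≤ (A i i * x i ^ 2) * (A j j * x j ^ 2) := by
        have := mul_le_mul_of_nonneg_right h1 (sq_nonneg (x i * x j))
        nlinarith [this]
      have ha : 0 ≤ A i i * x i ^ 2 := mul_nonneg hxi (sq_nonneg (x i))
      have hb : 0 ≤ A j j * x j ^ 2 := mul_nonneg hxj (sq_nonneg (x j))
      nlinarith [hsq, ha, hb, sq_nonneg (A i i * x i ^ 2 - A j j * x j ^ 2),
        sq_nonneg (2 * (c * A i j * (x i * x j)) + A i i * x i ^ 2 + A j j * x j ^ 2)]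
    have lower : ∀ i : Fin m, ((c:ℝ) + 1) * g i - T ≤ ∑ j, 2 * c * f i j := by
      intro i
      rw [← Finset.add_sum_erase _ _ (Finset.mem_univ i)]
      have h2 : ∑ j ∈ Finset.univ.erase i, (-(g i + g j))
          ≤ ∑ j ∈ Finset.univ.erase i, 2 * c * f i j := by
        apply Finset.sum_le_sum
        intro j hj
        exact key i j (Finset.ne_of_mem_erase hj).symm
      have h3 : ∑ j ∈ Finset.univ.erase i, (-(g i + g j))
          = -(c * g i + (T - g i)) := by
        rw [Finset.sum_neg_distrib]
        · congr 1
          rw [Finset.sum_add_distrib, Finset.sum_const, Finset.card_erase_of_mem (Finset.mem_univ i),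
            Finset.sum_erase_eq_sub (Finset.mem_univ i)]
          have : ((m - 1 : ℕ) : ℝ) = c := by
            have : (1:ℕ) ≤ m := by omega
            push_cast [this]
            ring
          rw [Finset.card_univ, Fintype.card_fin]
          rw [nsmul_eq_mul, this, ← hT]
      have hfd : 2 * c * f i i = 2 * c * g i := by
        simp only [hf, hg]; ring
      calc ((c:ℝ) + 1) * g i - T = 2 * c * g i + (-(c * g i + (T - g i))) := by ring
        _ ≤ 2 * c * f i i + ∑ j ∈ Finset.univ.erase i, 2 * c * f i j := by
            rw [hfd, ← h3]; linarith [h2]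
    calc (0:ℝ) = ∑ i : Fin m, (((c:ℝ) + 1) * g i - T) := by
          rw [Finset.sum_sub_distrib, ← Finset.mul_sum, Finset.sum_const, Finset.card_univ,
            Fintype.card_fin, ← hT, nsmul_eq_mul]
          have : (c:ℝ) + 1 = (m:ℝ) := by simp [hc]
          rw [this]; ring
      _ ≤ ∑ i, ∑ j, 2 * c * f i j := Finset.sum_le_sum fun i _ => lower i
      _ = 2 * c * ∑ i, ∑ j, f i j := by rw [Finset.mul_sum]; congr 1; ext i; rw [Finset.mul_sum]
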